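/- arXiv:2211.03281 — 3 statements merged into one kernel-verified Lean document; each statement's English description precedes it below -/
import Mathlib

section
/- (SF Projection Lemma, finite MDP form.) Let P be an N×N row-stochastic real matrix, 0 ≤ γ < 1, and let c* : Fin N → Fin m and c : Fin N → Fin n be clusterings such that c* s = c* s' implies c s = c s' for all states s, s'. Let Φ : Matrix (Fin n) (Fin m) ℝ be the projection matrix with Φ k l = 1 if there exists s with c s = k and c* s = l, else 0, and let E_c, E_{c*} be the one-hot indicator matrices of c and c*. Then (1 - γ • P)⁻¹ * E_c = ((1 - γ • P)⁻¹ * E_{c*}) * Φᵀ; that is, the clustered successor feature matrix of c equals that of c* multiplied by the transpose of the projection matrix. -/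
open Classical in
/-- SF Projection Lemma, finite MDP form: if `c` is a sub-clustering
of `c*`, then the clustered successor feature matrix of `c` equals that of `c*`
multiplied by the transpose of the projection matrix:
`(1 - γ • P)⁻¹ * E_c = ((1 - γ • P)⁻¹ * E_{c*}) * Φ.transpose`. -/
theorem sf_projection_lemma
    (N m n : ℕ) (P : Matrix (Fin N) (Fin N) ℝ)
    (hP_nonneg : ∀ s s', 0 ≤ P s s')
    (hP_rowsum : ∀ s, ∑ s', P s s' = 1)
    (γ : ℝ) (hγ0 : 0 ≤ γ) (hγ1 : γ < 1)
    (cstar : Fin N → Fin m) (c : Fin N → Fin n)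
    (hsub : ∀ s s' : Fin N, cstar s = cstar s' → c s = c s')
    (Φ : Matrix (Fin n) (Fin m) ℝ)
    (hΦ : ∀ k l, Φ k l = if ∃ s, c s = k ∧ cstar s = l then 1 else 0)
    (E_c : Matrix (Fin N) (Fin n) ℝ)
    (hEc : ∀ s k, E_c s k = if c s = k then 1 else 0)
    (E_cstar : Matrix (Fin N) (Fin m) ℝ)
    (hEcstar : ∀ s l, E_cstar s l = if cstar s = l then 1 else 0) :
    (1 - γ • P)⁻¹ * E_c = ((1 - γ • P)⁻¹ * E_cstar) * Φ.transpose := by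
  have key : E_c = E_cstar * Φ.transpose := by
    ext s k
    rw [Matrix.mul_apply, hEc]
    rw [Finset.sum_eq_single (cstar s)]
    · rw [hEcstar, Matrix.transpose_apply, hΦ, if_pos rfl, one_mul]
      by_cases h : c s = k
      · rw [if_pos h, if_pos ⟨s, h, rfl⟩]
      · rw [if_neg h, if_neg]
        rintro ⟨s', hs', hcs'⟩
        exact h ((hsub s s' hcs'.symm).trans hs')
    · intro l _ hl
      rw [hEcstar, if_neg (fun h => hl h.symm), zero_mul]
    · intro h; exact absurd (Finset.mem_univ _) h
  rw [key, ← Matrix.mul_assoc]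
end

section
/- (Path-wise SF projection.) Let S be a type, c* : S → Fin m and c : S → Fin n clusterings with c* s = c* s' implying c s = c s' for all s, s', and Φ : Matrix (Fin n) (Fin m) ℝ the projection matrix with Φ k l = 1 if there exists s with c s = k and c* s = l, else 0. Then for every 0 ≤ γ < 1 and every sequence of states s : ℕ → S, the discounted series converge and Φ.mulVec (∑' t, γ^t • e_{c* (s t)}) = ∑' t, γ^t • e_{c (s t)}, where e_j denotes the one-hot vector in the appropriate dimension. -/
set_option maxHeartbeats 1000000 in
open Classical in
/-- path-wise SF projection: if `c` is a sub-clustering of `c*` with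
projection matrix `Φ`, then for every `0 ≤ γ < 1` and every state sequence
`s : ℕ → S`, the discounted one-hot series converge and
`Φ.mulVec (∑' t, γ^t • e_{c* (s t)}) = ∑' t, γ^t • e_{c (s t)}`. -/
theorem pathwise_sf_projection
    (S : Type*) (m n : ℕ)
    (cstar : S → Fin m) (c : S → Fin n)
    (hsub : ∀ s s' : S, cstar s = cstar s' → c s = c s')
    (Φ : Matrix (Fin n) (Fin m) ℝ)
    (hΦ : ∀ k l, Φ k l = if ∃ s, c s = k ∧ cstar s = l then 1 else 0)
    (γ : ℝ) (hγ0 : 0 ≤ γ) (hγ1 : γ < 1)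
    (s : ℕ → S) :
    Summable (fun t : ℕ => γ ^ t • (fun l : Fin m => if l = cstar (s t) then (1 : ℝ) else 0)) ∧
    Summable (fun t : ℕ => γ ^ t • (fun k : Fin n => if k = c (s t) then (1 : ℝ) else 0)) ∧
    Φ.mulVec (∑' t : ℕ, γ ^ t • (fun l : Fin m => if l = cstar (s t) then (1 : ℝ) else 0))
      = ∑' t : ℕ, γ ^ t • (fun k : Fin n => if k = c (s t) then (1 : ℝ) else 0) := by
  have hgeo : Summable (fun t : ℕ => γ ^ t) := summable_geometric_of_lt_one hγ0 hγ1
  have hnorm : ∀ {ι : Type} [Fintype ι] [DecidableEq ι] (g : ℕ → ι) (t : ℕ),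
      ‖γ ^ t • (fun l : ι => if l = g t then (1 : ℝ) else 0)‖ ≤ γ ^ t := by
    intro ι _ _ g t
    rw [norm_smul]
    have h1 : ‖(fun l : ι => if l = g t then (1 : ℝ) else 0)‖ ≤ 1 := by
      rw [pi_norm_le_iff_of_nonneg zero_le_one]
      intro l
      by_cases h : l = g t <;> simp [h]
    calc ‖γ ^ t‖ * ‖(fun l : ι => if l = g t then (1 : ℝ) else 0)‖
        ≤ ‖γ ^ t‖ * 1 := by
          exact mul_le_mul_of_nonneg_left h1 (norm_nonneg _)
      _ = |γ ^ t| := by rw [mul_one]; rfl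
      _ = γ ^ t := abs_of_nonneg (pow_nonneg hγ0 t)
  rcases Nat.eq_zero_or_pos m with hm | hm
  · subst hm; exact (cstar (s 0)).elim0
  rcases Nat.eq_zero_or_pos n with hn | hn
  · subst hn; exact (c (s 0)).elim0
  haveI : Nonempty (Fin m) := ⟨⟨0, hm⟩⟩
  haveI : Nonempty (Fin n) := ⟨⟨0, hn⟩⟩
  have hS1 : Summable (fun t : ℕ => γ ^ t • (fun l : Fin m => if l = cstar (s t) then (1 : ℝ) else 0)) :=
    Summable.of_norm_bounded hgeo (fun t => hnorm (fun t => cstar (s t)) t)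
  have hS2 : Summable (fun t : ℕ => γ ^ t • (fun k : Fin n => if k = c (s t) then (1 : ℝ) else 0)) :=
    Summable.of_norm_bounded hgeo (fun t => hnorm (fun t => c (s t)) t)
  refine ⟨hS1, hS2, ?_⟩
  have hL : Continuous (Φ.mulVecLin) := LinearMap.continuous_of_finiteDimensional _
  let L : (Fin m → ℝ) →L[ℝ] (Fin n → ℝ) := ⟨Φ.mulVecLin, hL⟩
  have h1 : Φ.mulVec (∑' t : ℕ, γ ^ t • (fun l : Fin m => if l = cstar (s t) then (1 : ℝ) else 0))
      = ∑' t : ℕ, L (γ ^ t • (fun l : Fin m => if l = cstar (s t) then (1 : ℝ) else 0)) := by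
    exact (L.map_tsum hS1)
  rw [h1]
  congr 1
  funext t
  have hLapp : ∀ v : Fin m → ℝ, L v = Φ.mulVec v := fun v => rfl
  show L (γ ^ t • (fun l : Fin m => if l = cstar (s t) then (1 : ℝ) else 0))
      = γ ^ t • (fun k : Fin n => if k = c (s t) then (1 : ℝ) else 0)
  rw [map_smul, hLapp]
  congr 1
  funext k
  simp only [Matrix.mulVec, dotProduct]
  rw [Finset.sum_eq_single (cstar (s t))]
  · rw [if_pos rfl, mul_one, hΦ]
    by_cases hk : k = c (s t)
    · rw [if_pos ⟨s t, hk.symm, rfl⟩, if_pos hk]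
    · rw [if_neg, if_neg hk]
      rintro ⟨s', h1, h2⟩
      exact hk ((hsub (s t) s' h2.symm).symm ▸ h1.symm) 
  · intro l _ hl
    rw [if_neg hl, mul_zero]
  · intro h; exact absurd (Finset.mem_univ _) h
end

section
/- (Preservation of equal successor features, Equation (15).) Let P be an N×N row-stochastic real matrix, 0 ≤ γ < 1, and let c* : Fin N → Fin m and c : Fin N → Fin n be clusterings such that c* s = c* s' implies c s = c s' for all s, s'. Define Ψ_{c*} = (1 - γ • P)⁻¹ * E_{c*} and Ψ_c = (1 - γ • P)⁻¹ * E_c. If two states s, s̃ have equal rows in Ψ_{c*} (for all l, Ψ_{c*} s l = Ψ_{c*} s̃ l), then they also have equal rows in Ψ_c (for all k, Ψ_c s k = Ψ_c s̃ k). -/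
/-- preservation of equal successor features, Equation (15): if `c` is
a sub-clustering of `c*` and two states have equal rows in the clustered successor
feature matrix `Ψ_{c*} = (1 - γ • P)⁻¹ * E_{c*}`, then they have equal rows in
`Ψ_c = (1 - γ • P)⁻¹ * E_c`. -/
theorem equal_sf_preserved_under_subclustering
    (N m n : ℕ) (P : Matrix (Fin N) (Fin N) ℝ)
    (hP_nonneg : ∀ s s', 0 ≤ P s s')
    (hP_rowsum : ∀ s, ∑ s', P s s' = 1)
    (γ : ℝ) (hγ0 : 0 ≤ γ) (hγ1 : γ < 1)
    (cstar : Fin N → Fin m) (c : Fin N → Fin n)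
    (hsub : ∀ s s' : Fin N, cstar s = cstar s' → c s = c s')
    (E_c : Matrix (Fin N) (Fin n) ℝ)
    (hEc : ∀ s k, E_c s k = if c s = k then 1 else 0)
    (E_cstar : Matrix (Fin N) (Fin m) ℝ)
    (hEcstar : ∀ s l, E_cstar s l = if cstar s = l then 1 else 0)
    (Ψstar : Matrix (Fin N) (Fin m) ℝ) (hΨstar : Ψstar = (1 - γ • P)⁻¹ * E_cstar)
    (Ψ : Matrix (Fin N) (Fin n) ℝ) (hΨ : Ψ = (1 - γ • P)⁻¹ * E_c)
    (s st : Fin N) (heq : ∀ l, Ψstar s l = Ψstar st l) :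
    ∀ k, Ψ s k = Ψ st k := by
  classical
  -- the "aggregation" matrix Φ : Fin m → Fin n
  set Φ : Matrix (Fin m) (Fin n) ℝ :=
    Matrix.of fun l k => if ∃ s', cstar s' = l ∧ c s' = k then (1 : ℝ) else 0 with hΦ
  have hE : E_c = E_cstar * Φ := by
    ext x k
    rw [Matrix.mul_apply]
    have hsum : ∀ l, E_cstar x l * Φ l k =
        if l = cstar x then Φ (cstar x) k else 0 := by
      intro l
      rw [hEcstar]
      by_cases h : cstar x = l
      · subst h; simp
      · simp [h, Ne.symm h]
    rw [Finset.sum_congr rfl fun l _ => hsum l, Finset.sum_ite_eq' , if_pos (Finset.mem_univ _)]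
    rw [hEc, hΦ]
    simp only [Matrix.of_apply]
    by_cases h : c x = k
    · rw [if_pos h, if_pos ⟨x, rfl, h⟩]
    · rw [if_neg h, if_neg]
      rintro ⟨s', hs1, hs2⟩
      exact h ((hsub x s' hs1.symm).trans hs2)
  have hΨeq : Ψ = Ψstar * Φ := by
    rw [hΨ, hΨstar, hE, Matrix.mul_assoc]
  intro k
  rw [hΨeq]
  simp only [Matrix.mul_apply]
  exact Finset.sum_congr rfl fun l _ => by rw [heq l]
end
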